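/- Let k be a positive integer and let Γ be a k-free group. Let R ≤ Γ be a finitely generated subgroup of rank strictly less than k, and let C ≤ Γ be a cyclic subgroup such that the subgroup ⟨R ∪ C⟩ generated by R and C has rank strictly greater than the rank of R. Then C is infinite cyclic, and ⟨R ∪ C⟩ is the internal free product of R and C; that is, the canonical homomorphism from the free product R ∗ C to Γ induced by the inclusions of R and of C is injective and has image ⟨R ∪ C⟩. -/

import Mathlib

/-- The rank of a subgroup: the minimal cardinality of a finite generating set,
or `⊤` if the subgroup is not finitely generated. -/
noncomputable def Subgroup.rk {Γ : Type*} [Group Γ] (H : Subgroup Γ) : ℕ∞ :=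
  sInf {n : ℕ∞ | ∃ S : Finset Γ, (S.card : ℕ∞) = n ∧ Subgroup.closure (S : Set Γ) = H}

/-- A group is `k`-free if every finitely generated subgroup of rank at most `k` is free. -/
def IsKFree (k : ℕ) (Γ : Type*) [Group Γ] : Prop :=
  ∀ H : Subgroup Γ, H.rk ≤ (k : ℕ∞) → IsFreeGroup H

namespace KFreeAux

open Function

variable {α : Type*} [DecidableEq α]

section Perm

variable (w : List (α × Bool))

/-- no adjacent cancelling pair -/
def NoAdj : Prop := ∀ (i : ℕ) (x : α) (b : Bool),
    w[i]? = some (x, b) → w[i+1]? = some (x, !b) → False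

/-- domain predicate for letter `a` -/
def P (a : α) (v : Fin (w.length + 1)) : Prop :=
  (0 < v.1 ∧ w[v.1 - 1]? = some (a, true)) ∨ w[v.1]? = some (a, false)

/-- codomain predicate for letter `a` -/
def Q (a : α) (v : Fin (w.length + 1)) : Prop :=
  w[v.1]? = some (a, true) ∨ (0 < v.1 ∧ w[v.1 - 1]? = some (a, false))

variable {w}

def fwd (a : α) (v : {v // P w a v}) : {v // Q w a v} :=
  if h : 0 < v.1.1 ∧ w[v.1.1 - 1]? = some (a, true) then
    ⟨⟨v.1.1 - 1, by omega⟩, Or.inl h.2⟩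
  else
    have h2 : w[v.1.1]? = some (a, false) := v.2.resolve_left h
    have hlt : v.1.1 < w.length := (List.getElem?_eq_some_iff.mp h2).1
    ⟨⟨v.1.1 + 1, by omega⟩, Or.inr ⟨Nat.succ_pos _, by simpa using h2⟩⟩

def bwd (a : α) (v : {v // Q w a v}) : {v // P w a v} :=
  if h : w[v.1.1]? = some (a, true) then
    have hlt : v.1.1 < w.length := (List.getElem?_eq_some_iff.mp h).1
    ⟨⟨v.1.1 + 1, by omega⟩, Or.inl ⟨Nat.succ_pos _, by simpa using h⟩⟩
  else
    have h2 : 0 < v.1.1 ∧ w[v.1.1 - 1]? = some (a, false) := v.2.resolve_left h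
    ⟨⟨v.1.1 - 1, by omega⟩, Or.inr h2.2⟩

/-- the partial bijection -/
def eqv (hw : NoAdj w) (a : α) : {v // P w a v} ≃ {v // Q w a v} where
  toFun := fwd a
  invFun := bwd a
  left_inv := by
    rintro ⟨v, hv⟩
    by_cases h : 0 < v.1 ∧ w[v.1 - 1]? = some (a, true)
    · rw [fwd, dif_pos h, bwd, dif_pos (show w[(v.1 - 1 : ℕ)]? = some (a, true) from h.2)]
      exact Subtype.ext (Fin.ext (by simp; omega))
    · rw [fwd, dif_neg h]
      have h2 : w[v.1]? = some (a, false) := hv.resolve_left h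
      have hno : ¬ (w[(v.1 + 1 : ℕ)]? = some (a, true)) := fun hc => hw v.1 a false h2 hc
      rw [bwd, dif_neg (by simpa using hno)]
      exact Subtype.ext (Fin.ext (by simp))
  right_inv := by
    rintro ⟨v, hv⟩
    by_cases h : w[v.1]? = some (a, true)
    · rw [bwd, dif_pos h,
        fwd, dif_pos (show 0 < v.1 + 1 ∧ w[(v.1 + 1 - 1 : ℕ)]? = some (a, true) from
          ⟨Nat.succ_pos _, by simpa using h⟩)]
      exact Subtype.ext (Fin.ext (by simp))
    · rw [bwd, dif_neg h]
      have h2 : 0 < v.1 ∧ w[v.1 - 1]? = some (a, false) := hv.resolve_left h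
      have hno : ¬ (0 < (v.1 - 1 : ℕ) ∧ w[(v.1 - 1 - 1 : ℕ)]? = some (a, true)) := by
        rintro ⟨hpos, hc⟩
        have he : (v.1 - 1 - 1) + 1 = v.1 - 1 := by omega
        exact hw (v.1 - 1 - 1) a true hc (by rw [he]; simpa using h2.2)
      rw [fwd, dif_neg (by simpa using hno)]
      exact Subtype.ext (Fin.ext (by simp; omega))

/-- the permutation for letter `a` -/
noncomputable def perm (hw : NoAdj w) (a : α) : Equiv.Perm (Fin (w.length + 1)) := by
  classical exact (eqv hw a).extendSubtype

theorem eqv_apply (hw : NoAdj w) (a : α) (v : {v // P w a v}) :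
    ((eqv hw a) v : Fin (w.length + 1)) = (fwd a v : {v // Q w a v}).1 := rfl

theorem perm_apply_true (hw : NoAdj w) {a : α} {i : ℕ} (h : w[i]? = some (a, true)) :
    perm hw a ⟨i + 1, by have := (List.getElem?_eq_some_iff.mp h).1; omega⟩
      = ⟨i, by have := (List.getElem?_eq_some_iff.mp h).1; omega⟩ := by
  classical
  have hlt : i < w.length := (List.getElem?_eq_some_iff.mp h).1
  have hp : P w a ⟨i + 1, by omega⟩ := Or.inl ⟨Nat.succ_pos _, by simpa using h⟩
  rw [perm]
  rw [Equiv.extendSubtype_apply_of_mem _ _ hp]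
  rw [eqv_apply]
  rw [fwd, dif_pos (show 0 < i + 1 ∧ w[(i + 1 - 1 : ℕ)]? = some (a, true) from
    ⟨Nat.succ_pos _, by simpa using h⟩)]
  exact Fin.ext (by simp)

theorem perm_apply_false (hw : NoAdj w) {a : α} {i : ℕ} (h : w[i]? = some (a, false)) :
    perm hw a ⟨i, by have := (List.getElem?_eq_some_iff.mp h).1; omega⟩
      = ⟨i + 1, by have := (List.getElem?_eq_some_iff.mp h).1; omega⟩ := by
  classical
  have hlt : i < w.length := (List.getElem?_eq_some_iff.mp h).1
  have hp : P w a ⟨i, by omega⟩ := Or.inr (by simpa using h)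
  rw [perm]
  rw [Equiv.extendSubtype_apply_of_mem _ _ hp]
  rw [eqv_apply]
  have hno : ¬ (0 < (i:ℕ) ∧ w[(i - 1 : ℕ)]? = some (a, true)) := by
    rintro ⟨hpos, hc⟩
    have he : (i - 1) + 1 = i := by omega
    exact hw (i-1) a true hc (by rw [he]; simpa using h)
  rw [fwd, dif_neg (by simpa using hno)]

end Perm

section Eval

variable {w : List (α × Bool)}

theorem drop_prod (hw : NoAdj w) :
    ∀ (n i : ℕ) (hi : i ≤ w.length), w.length - i = n →
      (((w.drop i).map (fun c => cond c.2 (perm hw c.1) (perm hw c.1)⁻¹)).prod)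
          ⟨w.length, Nat.lt_succ_self _⟩ = ⟨i, by omega⟩ := by
  intro n
  induction n with
  | zero =>
    intro i hi hn
    have : i = w.length := by omega
    subst this
    simp only [List.drop_length, List.map_nil, List.prod_nil, Equiv.Perm.one_apply]
  | succ n ih =>
    intro i hi hn
    have hlt : i < w.length := by omega
    rw [List.drop_eq_getElem_cons hlt, List.map_cons, List.prod_cons, Equiv.Perm.mul_apply,
      ih (i+1) (by omega) (by omega)]
    rcases hc : w[i] with ⟨y, b⟩
    have hsome : w[i]? = some (y, b) := by rw [List.getElem?_eq_getElem hlt, hc]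
    cases b with
    | false =>
      simp only [hc, cond_false]
      have hpf := perm_apply_false hw hsome
      calc (perm hw y)⁻¹ ⟨i + 1, by omega⟩
          = (perm hw y)⁻¹ (perm hw y ⟨i, by omega⟩) := by rw [hpf]
        _ = ⟨i, by omega⟩ := (perm hw y).symm_apply_apply _
    | true =>
      simp only [hc, cond_true]
      exact perm_apply_true hw hsome

end Eval

/-- Residual finiteness of free groups. -/
theorem exists_hom_ne_one {β : Type*} (x : FreeGroup β) (hx : x ≠ 1) :
    ∃ (Q : Type) (_ : Group Q) (_ : Finite Q) (ψ : FreeGroup β →* Q), ψ x ≠ 1 := by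
  letI := Classical.decEq β
  set w := x.toWord with hwdef
  have hred : NoAdj w := by
    intro i y b h1 h2
    obtain ⟨hi1, e1⟩ := List.getElem?_eq_some_iff.mp h1
    obtain ⟨hi2, e2⟩ := List.getElem?_eq_some_iff.mp h2
    have hsurg : w = w.take i ++ (y, b) :: (y, !b) :: w.drop (i + 2) := by
      conv_lhs => rw [← List.take_append_drop i w]
      congr 1
      rw [List.drop_eq_getElem_cons hi1, e1, List.drop_eq_getElem_cons hi2, e2]
    exact FreeGroup.reduce.not ((FreeGroup.reduce_toWord x).trans hsurg)
  have hL : 0 < w.length := by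
    rcases Nat.eq_zero_or_pos w.length with h0 | h
    · exact absurd (FreeGroup.toWord_eq_nil_iff.mp (List.length_eq_zero_iff.mp h0)) hx
    · exact h
  refine ⟨Equiv.Perm (Fin (w.length + 1)), inferInstance, inferInstance,
    FreeGroup.lift (fun a => perm hred a), ?_⟩
  intro h1
  have hx2 : FreeGroup.lift (fun a => perm hred a) x
      = (w.map fun c => cond c.2 (perm hred c.1) (perm hred c.1)⁻¹).prod := by
    conv_lhs => rw [← FreeGroup.mk_toWord (x := x)]
    exact FreeGroup.lift_mk
  have hd := drop_prod hred w.length 0 (Nat.zero_le _) (by omega)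
  rw [List.drop_zero] at hd
  rw [h1] at hx2
  rw [← hx2, Equiv.Perm.one_apply] at hd
  have := Fin.val_eq_of_eq hd
  simp only at this
  omega

/-- homs agreeing on a generating set are equal -/
theorem hom_eq_of_closure {G Q : Type*} [Group G] [Group Q] {s : Set G}
    (hs : Subgroup.closure s = ⊤) {f g : G →* Q} (h : ∀ x ∈ s, f x = g x) : f = g := by
  ext x
  have hx : x ∈ Subgroup.closure s := hs ▸ Subgroup.mem_top x
  induction hx using Subgroup.closure_induction with
  | mem x hx => exact h x hx
  | one => simp
  | mul x y _ _ hx hy => simp [map_mul, hx, hy]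
  | inv x _ hx => simp [hx]

/-- finitely generated free groups are Hopfian -/
theorem hopf {ι : Type*} [Finite ι] (φ : FreeGroup ι →* FreeGroup ι)
    (hφ : Function.Surjective φ) : Function.Injective φ := by
  rw [injective_iff_map_eq_one]
  intro x hx1
  by_contra hx
  obtain ⟨Q, _, _, ψ, hψ⟩ := exists_hom_ne_one x hx
  have hfin : Finite (FreeGroup ι →* Q) := Finite.of_equiv _ FreeGroup.lift
  have hinj : Function.Injective (fun h : FreeGroup ι →* Q => h.comp φ) :=
    fun h1 h2 he => (MonoidHom.cancel_right hφ).mp he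
  obtain ⟨h, hh⟩ := (Finite.injective_iff_surjective.mp hinj) ψ
  have : ψ x = h (φ x) := by rw [← hh]; rfl
  rw [hx1, map_one] at this
  exact hψ this

/-- a free group with a generating set of size `n` has a basis of size at most `n` -/
theorem basis_card_le {G : Type*} [Group G] {ι : Type*} (b : FreeGroupBasis ι G)
    (T : Finset G) (hT : Subgroup.closure (T : Set G) = ⊤) :
    ∃ _ : Finite ι, Nat.card ι ≤ T.card := by
  classical
  set Q := Multiplicative (ZMod 2) with hQ
  haveI : Nontrivial (ZMod 2) := ⟨0, 1, by decide⟩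
  have hres : Function.Injective (fun h : G →* Q => (fun t : {x : G // x ∈ T} => h t.1)) := by
    intro h1 h2 he
    exact hom_eq_of_closure hT fun x hx =>
      congrFun he (⟨x, Finset.mem_coe.mp hx⟩ : {x : G // x ∈ T})
  have hJ : Function.Injective
      ((fun h : G →* Q => (fun t : {x : G // x ∈ T} => h t.1)) ∘ b.lift) :=
    hres.comp (Equiv.injective _)
  have hfin1 : Finite (ι → Q) := Finite.of_injective _ hJ
  have hfinι : Finite ι := by
    by_contra hinf
    rw [not_finite_iff_infinite] at hinf
    exact not_finite (ι → Q)
  refine ⟨hfinι, ?_⟩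
  letI := Fintype.ofFinite ι
  have hcard : Fintype.card (ι → Q) ≤ Fintype.card ({x : G // x ∈ T} → Q) :=
    Fintype.card_le_of_injective _ hJ
  rw [Fintype.card_fun, Fintype.card_fun] at hcard
  have hQ2 : Fintype.card Q = 2 := by
    have : Fintype.card Q = Fintype.card (ZMod 2) := Fintype.card_congr (by rw [hQ]; rfl)
    rw [this, ZMod.card]
  rw [hQ2] at hcard
  have hTc : Fintype.card {x : G // x ∈ T} = T.card := Fintype.card_coe T
  rw [hTc] at hcard
  rw [Nat.card_eq_fintype_card]
  exact (Nat.pow_le_pow_iff_right (by norm_num)).mp hcard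

/-- A generating family of minimal cardinality of a f.g. free group is a basis. -/
theorem basis_inj {G : Type*} [Group G] {ι κ : Type*} [Fintype κ] (b : FreeGroupBasis ι G)
    (v : κ → G) (hv : Subgroup.closure (Set.range v) = ⊤)
    (hmin : ∀ T' : Finset G, Subgroup.closure (T' : Set G) = ⊤ → Fintype.card κ ≤ T'.card) :
    Function.Injective (FreeGroup.lift v) := by
  classical
  obtain ⟨hfin, hle⟩ := basis_card_le b (Finset.univ.image v)
    (by rw [Finset.coe_image, Finset.coe_univ, Set.image_univ]; exact hv)
  letI := Fintype.ofFinite ι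
  have binj : Function.Injective b := b.injective
  have h1 : Fintype.card ι ≤ Fintype.card κ := by
    rw [← Nat.card_eq_fintype_card]
    exact hle.trans ((Finset.card_image_le).trans (by simp))
  have h2 : Fintype.card κ ≤ Fintype.card ι := by
    refine hmin (Finset.univ.image b) ?_ |>.trans ?_
    · rw [Finset.coe_image, Finset.coe_univ, Set.image_univ]
      have hb : Set.range ⇑b = ⇑b.repr.symm '' (Set.range FreeGroup.of) := by
        rw [← Set.range_comp]; rfl
      rw [hb,
        show ⇑b.repr.symm '' Set.range FreeGroup.of
          = ⇑b.repr.symm.toMonoidHom '' Set.range FreeGroup.of from rfl,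
        ← MonoidHom.map_closure b.repr.symm.toMonoidHom, FreeGroup.closure_range_of,
        ← MonoidHom.range_eq_map, MonoidHom.range_eq_top]
      exact b.repr.symm.surjective
    · exact (Finset.card_image_le).trans (by simp)
  have e2 : κ ≃ ι := Fintype.equivOfCardEq (le_antisymm h2 h1)
  set c : FreeGroup κ ≃* FreeGroup ι := FreeGroup.freeGroupCongr e2 with hc
  set Ψ : FreeGroup ι →* FreeGroup ι :=
    b.repr.toMonoidHom.comp ((FreeGroup.lift v).comp c.symm.toMonoidHom) with hΨ
  have hliftsurj : Function.Surjective (FreeGroup.lift v) := by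
    rw [← MonoidHom.range_eq_top, FreeGroup.range_lift_eq_closure, hv]
  have hΨsurj : Function.Surjective Ψ := by
    rw [hΨ]
    exact b.repr.surjective.comp (hliftsurj.comp c.symm.surjective)
  have hΨinj := hopf Ψ hΨsurj
  have key : ∀ x, FreeGroup.lift v x = b.repr.symm (Ψ (c x)) := by
    intro x
    simp [hΨ]
  intro x y hxy
  rw [key, key] at hxy
  exact c.injective (hΨinj (b.repr.symm.injective hxy))

section Assemble

variable {Γ : Type*} [Group Γ] {A : Type*}

theorem coprod_lift_inj (R C : Subgroup Γ) (u : A → Γ) (g : Γ)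
    (hWinj : Function.Injective (FreeGroup.lift (Sum.elim u (fun _ : Unit => g))))
    (hR : Subgroup.closure (Set.range u) = R) (hC : Subgroup.zpowers g = C) :
    Function.Injective (Monoid.Coprod.lift R.subtype C.subtype) ∧ Infinite C := by
  classical
  set W : A ⊕ Unit → Γ := Sum.elim u (fun _ : Unit => g) with hW
  -- retractions showing `FreeGroup.map Sum.inl/inr` are injective
  have hinl : Function.Injective (FreeGroup.map (Sum.inl : A → A ⊕ Unit)) := by
    intro x y h
    have hcomp : (FreeGroup.lift (Sum.elim FreeGroup.of (fun _ : Unit => 1))).comp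
        (FreeGroup.map (Sum.inl : A → A ⊕ Unit)) = MonoidHom.id _ := by
      apply FreeGroup.ext_hom; intro a
      simp [FreeGroup.map.of]
    have hx := DFunLike.congr_fun hcomp x
    have hy := DFunLike.congr_fun hcomp y
    simp only [MonoidHom.comp_apply, MonoidHom.id_apply] at hx hy
    rw [← hx, ← hy, h]
  have hinr : Function.Injective (FreeGroup.map (Sum.inr : Unit → A ⊕ Unit)) := by
    intro x y h
    have hcomp : (FreeGroup.lift (Sum.elim (fun _ : A => 1) FreeGroup.of)).comp
        (FreeGroup.map (Sum.inr : Unit → A ⊕ Unit)) = MonoidHom.id _ := by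
      apply FreeGroup.ext_hom; intro a
      simp [FreeGroup.map.of]
    have hx := DFunLike.congr_fun hcomp x
    have hy := DFunLike.congr_fun hcomp y
    simp only [MonoidHom.comp_apply, MonoidHom.id_apply] at hx hy
    rw [← hx, ← hy, h]
  set ΦR : FreeGroup A →* Γ := (FreeGroup.lift W).comp (FreeGroup.map Sum.inl) with hΦR
  set ΦC : FreeGroup Unit →* Γ := (FreeGroup.lift W).comp (FreeGroup.map Sum.inr) with hΦC
  have hΦRinj : Function.Injective ⇑ΦR := by
    rw [hΦR, MonoidHom.coe_comp]; exact hWinj.comp hinl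
  have hΦCinj : Function.Injective ⇑ΦC := by
    rw [hΦC, MonoidHom.coe_comp]; exact hWinj.comp hinr
  have hΦRlift : ΦR = FreeGroup.lift u := by
    apply FreeGroup.ext_hom; intro a
    simp [hΦR, hW, FreeGroup.map.of]
  have hΦClift : ΦC = FreeGroup.lift (fun _ : Unit => g) := by
    apply FreeGroup.ext_hom; intro a
    simp [hΦC, hW, FreeGroup.map.of]
  have hRrange : ΦR.range = R := by
    rw [hΦRlift, FreeGroup.range_lift_eq_closure, hR]
  have hCrange : ΦC.range = C := by
    rw [hΦClift, FreeGroup.range_lift_eq_closure, Set.range_const,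
      ← Subgroup.zpowers_eq_closure, hC]
  have hRmem : ∀ x, ΦR x ∈ R := fun x => hRrange ▸ ⟨x, rfl⟩
  have hCmem : ∀ x, ΦC x ∈ C := fun x => hCrange ▸ ⟨x, rfl⟩
  have hRbij : Function.Bijective ⇑(ΦR.codRestrict R hRmem) := by
    constructor
    · intro x y h
      exact hΦRinj (congrArg Subtype.val h)
    · rintro ⟨y, hy⟩
      rw [← hRrange] at hy
      obtain ⟨x, hx⟩ := hy
      exact ⟨x, Subtype.ext hx⟩
  have hCbij : Function.Bijective ⇑(ΦC.codRestrict C hCmem) := by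
    constructor
    · intro x y h
      exact hΦCinj (congrArg Subtype.val h)
    · rintro ⟨y, hy⟩
      rw [← hCrange] at hy
      obtain ⟨x, hx⟩ := hy
      exact ⟨x, Subtype.ext hx⟩
  set eR : FreeGroup A ≃* ↥R := MulEquiv.ofBijective _ hRbij with heRdef
  set eC : FreeGroup Unit ≃* ↥C := MulEquiv.ofBijective _ hCbij with heCdef
  have heR : ∀ x, ((eR x : ↥R) : Γ) = ΦR x := fun x => by
    rw [heRdef, MulEquiv.ofBijective_apply]; rfl
  have heC : ∀ x, ((eC x : ↥C) : Γ) = ΦC x := fun x => by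
    rw [heCdef, MulEquiv.ofBijective_apply]; rfl
  have hCinf : Infinite ↥C := by
    haveI : Infinite (FreeGroup Unit) :=
      (Equiv.infinite_iff FreeGroup.freeGroupUnitEquivInt).mpr inferInstance
    exact (Equiv.infinite_iff eC.toEquiv).mp inferInstance
  refine ⟨?_, hCinf⟩
  set E : Monoid.Coprod (FreeGroup A) (FreeGroup Unit) ≃* Monoid.Coprod ↥R ↥C :=
    MulEquiv.coprodCongr eR eC with hE
  have hEinl : ∀ x, E (Monoid.Coprod.inl x) = Monoid.Coprod.inl (eR x) := fun _ => rfl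
  have hEinr : ∀ x, E (Monoid.Coprod.inr x) = Monoid.Coprod.inr (eC x) := fun _ => rfl
  set Φ : Monoid.Coprod (FreeGroup A) (FreeGroup Unit) →* FreeGroup (A ⊕ Unit) :=
    Monoid.Coprod.lift (FreeGroup.map Sum.inl) (FreeGroup.map Sum.inr) with hΦ
  have hΦretr : (FreeGroup.lift (Sum.elim
        (fun a : A => Monoid.Coprod.inl (FreeGroup.of a) :
          A → Monoid.Coprod (FreeGroup A) (FreeGroup Unit))
        (fun b : Unit => Monoid.Coprod.inr (FreeGroup.of b)))).comp Φ
      = MonoidHom.id _ := by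
    apply Monoid.Coprod.hom_ext <;> apply FreeGroup.ext_hom <;> intro a <;>
      simp [hΦ, Monoid.Coprod.lift_apply_inl, Monoid.Coprod.lift_apply_inr, FreeGroup.map.of]
  have hΦinj : Function.Injective ⇑Φ := by
    intro x y h
    have hx := DFunLike.congr_fun hΦretr x
    have hy := DFunLike.congr_fun hΦretr y
    simp only [MonoidHom.comp_apply, MonoidHom.id_apply] at hx hy
    rw [← hx, ← hy, h]
  have hcomm : (Monoid.Coprod.lift R.subtype C.subtype).comp E.toMonoidHom
      = (FreeGroup.lift W).comp Φ := by
    apply Monoid.Coprod.hom_ext <;> apply FreeGroup.ext_hom <;> intro a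
    · have h1 : (Monoid.Coprod.lift R.subtype C.subtype) (E (Monoid.Coprod.inl (FreeGroup.of a)))
          = ΦR (FreeGroup.of a) := by
        rw [hEinl, Monoid.Coprod.lift_apply_inl, Subgroup.coe_subtype]
        exact heR _
      have h2 : (FreeGroup.lift W) (Φ (Monoid.Coprod.inl (FreeGroup.of a)))
          = ΦR (FreeGroup.of a) := by
        rw [hΦ, Monoid.Coprod.lift_apply_inl, hΦR]
        rfl
      simpa using h1.trans h2.symm
    · have h1 : (Monoid.Coprod.lift R.subtype C.subtype) (E (Monoid.Coprod.inr (FreeGroup.of a)))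
          = ΦC (FreeGroup.of a) := by
        rw [hEinr, Monoid.Coprod.lift_apply_inr, Subgroup.coe_subtype]
        exact heC _
      have h2 : (FreeGroup.lift W) (Φ (Monoid.Coprod.inr (FreeGroup.of a)))
          = ΦC (FreeGroup.of a) := by
        rw [hΦ, Monoid.Coprod.lift_apply_inr, hΦC]
        rfl
      simpa using h1.trans h2.symm
  have hpt : ∀ x, Monoid.Coprod.lift R.subtype C.subtype x
      = (FreeGroup.lift W) (Φ (E.symm x)) := by
    intro x
    have h := DFunLike.congr_fun hcomm (E.symm x)
    simp only [MonoidHom.comp_apply, MulEquiv.coe_toMonoidHom] at h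
    rw [← h, MulEquiv.apply_symm_apply]
  intro x y h
  rw [hpt, hpt] at h
  exact E.symm.injective (hΦinj (hWinj h))

end Assemble

theorem rk_le_of {Γ : Type*} [Group Γ] (H : Subgroup Γ) (S : Finset Γ)
    (hS : Subgroup.closure (S : Set Γ) = H) : H.rk ≤ (S.card : ℕ∞) :=
  sInf_le ⟨S, rfl, hS⟩

end KFreeAux

/-- If `Γ` is `k`-free, `R ≤ Γ` is a finitely generated subgroup of rank `< k`, and `C` is a
cyclic subgroup such that `⟨R ∪ C⟩` has rank strictly greater than that of `R`, then `C` is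
infinite cyclic and `⟨R ∪ C⟩` is the internal free product of `R` and `C`: the canonical
homomorphism `R ∗ C →* Γ` induced by the inclusions is injective with image `R ⊔ C`. -/
theorem stmt0 {Γ : Type*} [Group Γ] (k : ℕ) (hk : 0 < k) (hfree : IsKFree k Γ)
    (R C : Subgroup Γ) (hRrank : R.rk < (k : ℕ∞))
    (hCcyc : ∃ g : Γ, C = Subgroup.zpowers g)
    (hrank : R.rk < (R ⊔ C).rk) :
    Infinite C ∧
      Function.Injective (Monoid.Coprod.lift R.subtype C.subtype) ∧
      (Monoid.Coprod.lift R.subtype C.subtype).range = R ⊔ C := by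
  classical
  obtain ⟨g, rfl⟩ := hCcyc
  -- a minimal generating set for R
  have hrkdef : R.rk = sInf {n : ℕ∞ | ∃ S : Finset Γ,
      (S.card : ℕ∞) = n ∧ Subgroup.closure (S : Set Γ) = R} := rfl
  have hne : {n : ℕ∞ | ∃ S : Finset Γ,
      (S.card : ℕ∞) = n ∧ Subgroup.closure (S : Set Γ) = R}.Nonempty := by
    by_contra hemp
    rw [Set.not_nonempty_iff_eq_empty] at hemp
    have : R.rk = ⊤ := by rw [hrkdef, hemp, sInf_empty]
    exact hRrank.ne_top this
  have hmem := csInf_mem hne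
  rw [← hrkdef] at hmem
  obtain ⟨S, hScard, hScl⟩ := hmem
  have hgS : g ∉ S := by
    intro hg
    have hle : Subgroup.zpowers g ≤ R :=
      Subgroup.zpowers_le.mpr (hScl ▸ Subgroup.subset_closure hg)
    rw [sup_of_le_left hle] at hrank
    exact lt_irrefl _ hrank
  set U : Finset Γ := insert g S with hU
  have hUcl : Subgroup.closure (U : Set Γ) = R ⊔ Subgroup.zpowers g := by
    rw [hU, Finset.coe_insert, Set.insert_eq, Subgroup.closure_union,
      ← Subgroup.zpowers_eq_closure, hScl, sup_comm]
  have hUcard : U.card = S.card + 1 := Finset.card_insert_of_notMem hgS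
  have hle : (R ⊔ Subgroup.zpowers g).rk ≤ ((S.card + 1 : ℕ) : ℕ∞) := by
    have := KFreeAux.rk_le_of _ U hUcl
    rwa [hUcard] at this
  have hgt : (S.card : ℕ∞) < (R ⊔ Subgroup.zpowers g).rk := by
    rw [hScard]; exact hrank
  have hrkeq : (R ⊔ Subgroup.zpowers g).rk = ((S.card + 1 : ℕ) : ℕ∞) := by
    refine le_antisymm hle ?_
    have h2 := Order.add_one_le_of_lt hgt
    rwa [show ((S.card : ℕ∞) + 1) = ((S.card + 1 : ℕ) : ℕ∞) by push_cast; ring] at h2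
  have hkle : ((S.card + 1 : ℕ) : ℕ∞) ≤ (k : ℕ∞) := by
    have h1 : (S.card : ℕ∞) < (k : ℕ∞) := by rw [hScard]; exact hRrank
    have h2 : S.card < k := by exact_mod_cast h1
    exact_mod_cast Nat.succ_le_of_lt h2
  haveI hfreeG : IsFreeGroup ↥(R ⊔ Subgroup.zpowers g) := hfree _ (le_of_eq_of_le hrkeq hkle)
  -- the generating family
  set W : ({x : Γ // x ∈ S} ⊕ Unit) → Γ :=
    Sum.elim (fun a => a.1) (fun _ => g) with hW
  have hWmem : ∀ x, W x ∈ R ⊔ Subgroup.zpowers g := by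
    rintro (a | u)
    · exact Subgroup.mem_sup_left (hScl ▸ Subgroup.subset_closure a.2)
    · exact Subgroup.mem_sup_right (Subgroup.mem_zpowers g)
  set v : ({x : Γ // x ∈ S} ⊕ Unit) → ↥(R ⊔ Subgroup.zpowers g) :=
    fun x => ⟨W x, hWmem x⟩ with hv
  have himg : ⇑(R ⊔ Subgroup.zpowers g).subtype '' Set.range v = (U : Set Γ) := by
    ext x
    constructor
    · rintro ⟨-, ⟨y, rfl⟩, rfl⟩
      cases y with
      | inl a =>
        rw [hU, Finset.coe_insert]
        exact Set.mem_insert_of_mem _ a.2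
      | inr u =>
        rw [hU, Finset.coe_insert]
        exact Set.mem_insert _ _
    · intro hx
      rw [hU, Finset.coe_insert] at hx
      rcases hx with rfl | hx
      · exact ⟨v (Sum.inr ()), ⟨_, rfl⟩, rfl⟩
      · exact ⟨v (Sum.inl ⟨x, hx⟩), ⟨_, rfl⟩, rfl⟩
  have hrange : Subgroup.closure (Set.range v) = ⊤ := by
    apply Subgroup.map_injective (R ⊔ Subgroup.zpowers g).subtype_injective
    rw [MonoidHom.map_closure, himg, hUcl, ← MonoidHom.range_eq_map, Subgroup.range_subtype]
  have hcardκ : Fintype.card ({x : Γ // x ∈ S} ⊕ Unit) = S.card + 1 := by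
    simp [Fintype.card_coe]
  have hmin : ∀ T' : Finset ↥(R ⊔ Subgroup.zpowers g),
      Subgroup.closure (T' : Set ↥(R ⊔ Subgroup.zpowers g)) = ⊤ →
      Fintype.card ({x : Γ // x ∈ S} ⊕ Unit) ≤ T'.card := by
    intro T' hT'
    have hT''cl : Subgroup.closure
        ((T'.image ⇑(R ⊔ Subgroup.zpowers g).subtype : Finset Γ) : Set Γ)
        = R ⊔ Subgroup.zpowers g := by
      rw [Finset.coe_image, ← MonoidHom.map_closure, hT',
        ← MonoidHom.range_eq_map, Subgroup.range_subtype]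
    have h3 := KFreeAux.rk_le_of _ _ hT''cl
    rw [hrkeq] at h3
    have h4 : S.card + 1 ≤ (T'.image ⇑(R ⊔ Subgroup.zpowers g).subtype).card := by
      exact_mod_cast h3
    rw [hcardκ]
    exact h4.trans Finset.card_image_le
  have hinj := KFreeAux.basis_inj (IsFreeGroup.basis ↥(R ⊔ Subgroup.zpowers g)) v hrange hmin
  have hLW : FreeGroup.lift W = (R ⊔ Subgroup.zpowers g).subtype.comp (FreeGroup.lift v) := by
    apply FreeGroup.ext_hom; intro a
    simp only [FreeGroup.lift_apply_of, MonoidHom.comp_apply, Subgroup.coe_subtype]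
    rfl
  have hWinj : Function.Injective (FreeGroup.lift W) := by
    rw [hLW, MonoidHom.coe_comp]
    exact (Subgroup.subtype_injective _).comp hinj
  have hRcl : Subgroup.closure (Set.range (fun a : {x : Γ // x ∈ S} => a.1)) = R := by
    rw [show Set.range (fun a : {x : Γ // x ∈ S} => a.1) = (S : Set Γ) by
      ext x; simp]
    exact hScl
  obtain ⟨hinj2, hinf⟩ := KFreeAux.coprod_lift_inj R (Subgroup.zpowers g)
    (fun a : {x : Γ // x ∈ S} => a.1) g hWinj hRcl rfl
  refine ⟨hinf, hinj2, ?_⟩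
  rw [Monoid.Coprod.range_lift, Subgroup.range_subtype, Subgroup.range_subtype]
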